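/- arXiv:1605.08903 — 6 statements merged into one kernel-verified Lean document; each statement's English description precedes it below -/
import Mathlib

section
/- For positive integers m, n with n ≥ m and m ≥ 2, the maximum over x ∈ [0,1] of x^m((1-x)/(1+x))^n is strictly less than (m/(4n))^m. -/
open Real Set

private lemma frac_le_exp : ∀ x ∈ Set.Icc (0:ℝ) 1, (1 - x) / (1 + x) ≤ Real.exp (-(2*x)) := by
  intro x hx
  obtain ⟨hx0, hx1⟩ := hx
  have h1x : (0:ℝ) < 1 + x := by linarith
  rw [div_le_iff₀ h1x]
  set g : ℝ → ℝ := fun x => (1 + x) * Real.exp (-(2*x)) - (1 - x) with hg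
  have hderiv : ∀ y : ℝ, HasDerivAt g
      (Real.exp (-(2*y)) + (1+y) * (Real.exp (-(2*y)) * (-2)) - (-1)) y := by
    intro y
    have h1 : HasDerivAt (fun y : ℝ => 1 + y) 1 y := (hasDerivAt_id y).const_add 1
    have h2 : HasDerivAt (fun y : ℝ => -(2*y)) (-2) y := by
      simpa using ((hasDerivAt_id y).const_mul (-2 : ℝ))
    have h3 : HasDerivAt (fun y : ℝ => Real.exp (-(2*y))) (Real.exp (-(2*y)) * (-2)) y :=
      h2.exp
    have h4 : HasDerivAt (fun y : ℝ => 1 - y) (-1) y := by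
      exact (hasDerivAt_id' y).const_sub 1
    have := (h1.mul h3).sub h4
    exact this.congr_deriv (by ring)
  have hmono : MonotoneOn g (Set.Icc (0:ℝ) 1) := by
    apply monotoneOn_of_deriv_nonneg (convex_Icc 0 1)
    · have : Continuous g := by
        apply Continuous.sub
        · exact (continuous_const.add continuous_id).mul
            (Real.continuous_exp.comp (by continuity))
        · exact continuous_const.sub continuous_id
      exact this.continuousOn
    · intro y hy
      exact (hderiv y).differentiableAt.differentiableWithinAt
    · intro y hy
      rw [(hderiv y).deriv]
      have hyp : 0 ≤ y := by
        simp only [interior_Icc, Set.mem_Ioo] at hy; linarith [hy.1]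
      have hle : (1 + 2*y) * Real.exp (-(2*y)) ≤ 1 := by
        have h := Real.add_one_le_exp (2*y)
        have hpos : 0 < Real.exp (-(2*y)) := Real.exp_pos _
        calc (1 + 2*y) * Real.exp (-(2*y)) ≤ Real.exp (2*y) * Real.exp (-(2*y)) := by
              apply mul_le_mul_of_nonneg_right _ hpos.le
              linarith
          _ = 1 := by rw [← Real.exp_add]; simp
      nlinarith [Real.exp_pos (-(2*y))]
  have h0 : g 0 = 0 := by simp [hg]
  have hgx := hmono (Set.mem_Icc.mpr ⟨le_refl 0, by norm_num⟩)
    (Set.mem_Icc.mpr ⟨hx0, hx1⟩) hx0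
  rw [h0] at hgx
  simp only [hg] at hgx
  linarith

private lemma self_mul_exp_neg_le (y : ℝ) : y * Real.exp (-y) ≤ Real.exp (-1) := by
  have h := Real.add_one_le_exp (y - 1)
  have hpos : 0 < Real.exp (-y) := Real.exp_pos _
  have hy : y ≤ Real.exp (y - 1) := by linarith
  calc y * Real.exp (-y) ≤ Real.exp (y - 1) * Real.exp (-y) :=
        mul_le_mul_of_nonneg_right hy hpos.le
    _ = Real.exp (-1) := by rw [← Real.exp_add]; ring_nf

/-- For integers m ≥ 2, n ≥ m, the maximum over x ∈ [0,1] of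
x^m·((1-x)/(1+x))^n is strictly less than (m/(4n))^m. -/
theorem max_critical_value_lt (m n : ℕ) (hm : 2 ≤ m) (hmn : m ≤ n) :
    sSup ((fun x : ℝ => x ^ m * ((1 - x) / (1 + x)) ^ n) '' Set.Icc 0 1)
      < ((m : ℝ) / (4 * n)) ^ m := by
  have hmR : (0:ℝ) < m := by exact_mod_cast (by omega : 0 < m)
  have hnR : (0:ℝ) < n := by exact_mod_cast (by omega : 0 < n)
  have key : ∀ x ∈ Set.Icc (0:ℝ) 1,
      x ^ m * ((1 - x) / (1 + x)) ^ n < ((m : ℝ) / (4 * n)) ^ m := by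
    intro x hx
    obtain ⟨hx0, hx1⟩ := hx
    have ht0 : 0 ≤ (1 - x) / (1 + x) := div_nonneg (by linarith) (by linarith)
    have ht : (1 - x) / (1 + x) ≤ Real.exp (-(2*x)) := frac_le_exp x ⟨hx0, hx1⟩
    have h1 : ((1 - x) / (1 + x)) ^ n ≤ Real.exp (-(2*x)) ^ n := pow_le_pow_left₀ ht0 ht n
    have h2 : Real.exp (-(2*x)) ^ n = Real.exp (-(2*n*x)) := by
      rw [← Real.exp_nat_mul]; congr 1; ring
    set y := 2*(n:ℝ)*x/m with hy
    have hxy : x = ((m:ℝ)/(2*n)) * y := by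
      rw [hy]; field_simp
    have hey : Real.exp (-(2*(n:ℝ)*x)) = Real.exp (-y) ^ m := by
      rw [← Real.exp_nat_mul]; congr 1
      rw [hy]; field_simp
    have hkey : x * Real.exp (-y) < (m:ℝ)/(4*n) := by
      have hb := self_mul_exp_neg_le y
      have he : Real.exp (-1) < 1/2 := by
        have h1e : (2:ℝ) < Real.exp 1 := lt_trans (by norm_num) Real.exp_one_gt_d9
        rw [Real.exp_neg]
        calc (Real.exp 1)⁻¹ < (2:ℝ)⁻¹ := by
              apply inv_strictAnti₀ (by norm_num) h1e
          _ = 1/2 := by norm_num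
      calc x * Real.exp (-y) = ((m:ℝ)/(2*n)) * (y * Real.exp (-y)) := by
            rw [hxy]; ring
        _ ≤ ((m:ℝ)/(2*n)) * Real.exp (-1) :=
            mul_le_mul_of_nonneg_left hb (by positivity)
        _ < ((m:ℝ)/(2*n)) * (1/2) :=
            mul_lt_mul_of_pos_left he (by positivity)
        _ = (m:ℝ)/(4*n) := by ring
    calc x ^ m * ((1 - x) / (1 + x)) ^ n ≤ x ^ m * Real.exp (-(2*(n:ℝ)*x)) := by
          apply mul_le_mul_of_nonneg_left _ (pow_nonneg hx0 m)
          rw [← h2]; exact h1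
      _ = (x * Real.exp (-y)) ^ m := by rw [mul_pow, ← hey]
      _ < ((m : ℝ) / (4 * n)) ^ m :=
          pow_lt_pow_left₀ hkey (mul_nonneg hx0 (Real.exp_pos _).le) (by omega)
  have hcont : ContinuousOn (fun x : ℝ => x ^ m * ((1 - x) / (1 + x)) ^ n)
      (Set.Icc 0 1) := by
    apply ContinuousOn.mul ((continuous_id.pow m).continuousOn)
    apply ContinuousOn.pow
    apply ContinuousOn.div
    · exact (continuous_const.sub continuous_id).continuousOn
    · exact (continuous_const.add continuous_id).continuousOn
    · intro x hx
      have : (0:ℝ) ≤ x := hx.1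
      intro h; linarith
  have hcomp : IsCompact ((fun x : ℝ => x ^ m * ((1 - x) / (1 + x)) ^ n) '' Set.Icc 0 1) :=
    isCompact_Icc.image_of_continuousOn hcont
  have hne : ((fun x : ℝ => x ^ m * ((1 - x) / (1 + x)) ^ n) '' Set.Icc 0 1).Nonempty :=
    (Set.nonempty_Icc.mpr (by norm_num)).image _
  obtain ⟨x, hx, hfx⟩ := hcomp.sSup_mem hne
  rw [← hfx]
  exact key x hx
end

section
/- For positive integers m ≥ 2, n ≥ m, set μ = m/(4n) and suppose μ^{m-1} ≤ 1/4. Then ((1+μ^m)/(1-μ^m))^n ≤ exp((23/45)·m·μ^{m-1}) < (exp(μ^{m-1}))^m. -/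
/-- Key analytic lemma: for 0 < x ≤ 1/16, (1+x)/(1-x) ≤ exp((92/45)x). -/
lemma ratio_le_exp {x : ℝ} (hx0 : 0 < x) (hx1 : x ≤ 1/16) :
    (1 + x) / (1 - x) ≤ Real.exp ((92/45) * x) := by
  have h1x : (0:ℝ) < 1 - x := by linarith
  rw [div_le_iff₀ h1x]
  have hq : (1 + (92/45) * x / 4) ^ 4 ≤ Real.exp ((92/45) * x) := by
    have h := Real.add_one_le_exp ((92/45) * x / 4)
    calc (1 + (92/45) * x / 4) ^ 4 ≤ Real.exp ((92/45) * x / 4) ^ 4 := by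
          apply pow_le_pow_left₀ (by nlinarith) (by linarith)
      _ = Real.exp ((92/45) * x) := by
          rw [← Real.exp_nat_mul]; ring_nf
  have key : 1 + x ≤ (1 + (92/45) * x / 4) ^ 4 * (1 - x) := by nlinarith [sq_nonneg x, sq_nonneg (x - 1/16), pow_pos hx0 3, pow_pos hx0 4]
  nlinarith [mul_le_mul_of_nonneg_right hq (le_of_lt h1x)]

/-- For integers m ≥ 2, n ≥ m, with μ = m/(4n) and μ^(m-1) ≤ 1/4,
((1+μ^m)/(1-μ^m))^n ≤ exp((23/45)·m·μ^(m-1)) < (exp(μ^(m-1)))^m. -/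
theorem mu_power_ineq (m n : ℕ) (hm : 2 ≤ m) (hmn : m ≤ n)
    (μ : ℝ) (hμ : μ = (m : ℝ) / (4 * n)) (hμ' : μ ^ (m - 1) ≤ 1 / 4) :
    ((1 + μ ^ m) / (1 - μ ^ m)) ^ n ≤ Real.exp ((23 / 45) * m * μ ^ (m - 1)) ∧
    Real.exp ((23 / 45) * m * μ ^ (m - 1)) < (Real.exp (μ ^ (m - 1))) ^ m := by
  have hn : 0 < n := lt_of_lt_of_le (by omega) hmn
  have hnR : (0:ℝ) < n := by exact_mod_cast hn
  have hmR : (0:ℝ) < m := by exact_mod_cast (by omega : 0 < m)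
  have hμpos : 0 < μ := by
    rw [hμ]; positivity
  have hμ4 : μ ≤ 1/4 := by
    rw [hμ, div_le_div_iff₀ (by positivity) (by norm_num)]
    have : (m:ℝ) ≤ n := by exact_mod_cast hmn
    linarith
  have hsplit : μ ^ m = μ ^ (m - 1) * μ := by
    rw [← pow_succ]; congr 1; omega
  have hμm1pos : 0 < μ ^ (m - 1) := pow_pos hμpos _
  have hxpos : 0 < μ ^ m := pow_pos hμpos _
  have hx16 : μ ^ m ≤ 1/16 := by
    rw [hsplit]
    calc μ ^ (m-1) * μ ≤ (1/4) * (1/4) :=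
          mul_le_mul hμ' hμ4 (le_of_lt hμpos) (by norm_num)
      _ = 1/16 := by norm_num
  have hkey := ratio_le_exp hxpos hx16
  have heq : (n:ℝ) * ((92/45) * μ ^ m) = (23 / 45) * m * μ ^ (m - 1) := by
    rw [hsplit, hμ]; field_simp; ring
  constructor
  · calc ((1 + μ ^ m) / (1 - μ ^ m)) ^ n
        ≤ (Real.exp ((92/45) * μ ^ m)) ^ n := by
          apply pow_le_pow_left₀ _ hkey
          have h1x : (0:ℝ) < 1 - μ ^ m := by linarith
          positivity
      _ = Real.exp ((n:ℝ) * ((92/45) * μ ^ m)) := by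
          rw [← Real.exp_nat_mul]
      _ = Real.exp ((23 / 45) * m * μ ^ (m - 1)) := by rw [heq]
  · rw [← Real.exp_nat_mul]
    apply Real.exp_lt_exp.mpr
    nlinarith [mul_pos hmR hμm1pos]
end

section
/- For positive integers m ≥ 2, n ≥ m, let v = max_{0≤x≤1} x^m((1-x)/(1+x))^n and g(r) = r^{m-1}((1+r)/(1-r))^n for 0 < r < 1. Then g(v) < 1. -/
lemma pointwise_bound (m n : ℕ) (hm : 1 ≤ m) (hn : 1 ≤ n) (x : ℝ)
    (hx0 : 0 ≤ x) (hx1 : x ≤ 1) :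
    x ^ m * ((1 - x) / (1 + x)) ^ n ≤ 1 / (2 * n) := by
  have h1x : (0:ℝ) < 1 + x := by linarith
  have hq0 : 0 ≤ (1 - x) / (1 + x) := div_nonneg (by linarith) h1x.le
  have h1 : (1 - x) / (1 + x) ≤ 1 / (1 + x) ^ 2 := by
    rw [div_le_div_iff₀ h1x (by positivity)]
    nlinarith [mul_nonneg (mul_nonneg hx0 hx0) h1x.le]
  have h2 : ((1 - x) / (1 + x)) ^ n ≤ (1 / (1 + x) ^ 2) ^ n :=
    pow_le_pow_left₀ hq0 h1 n
  have hbern : (1:ℝ) + (2 * n) * x ≤ (1 + x) ^ (2 * n) := by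
    have := one_add_mul_le_pow (a := x) (by linarith) (2 * n)
    convert this using 2 <;> push_cast <;> rfl
  have hden : (0:ℝ) < 1 + 2 * n * x := by positivity
  have h3 : (1 / (1 + x) ^ 2) ^ n ≤ 1 / (1 + 2 * n * x) := by
    rw [one_div_pow, ← pow_mul, mul_comm 2 n]
    apply one_div_le_one_div_of_le hden
    calc (1:ℝ) + 2 * n * x ≤ (1 + x) ^ (2 * n) := hbern
      _ = (1 + x) ^ (n * 2) := by ring_nf
  have hxm : x ^ m ≤ x := by
    calc x ^ m ≤ x ^ 1 := pow_le_pow_of_le_one hx0 hx1 hm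
      _ = x := pow_one x
  have hxm0 : 0 ≤ x ^ m := by positivity
  calc x ^ m * ((1 - x) / (1 + x)) ^ n
      ≤ x * (1 / (1 + 2 * n * x)) := by
        apply mul_le_mul hxm (h2.trans h3) (by positivity) hx0
    _ = x / (1 + 2 * n * x) := by ring
    _ ≤ 1 / (2 * n) := by
        rw [div_le_div_iff₀ hden (by positivity)]
        have hnn : (1:ℝ) ≤ n := by exact_mod_cast hn
        nlinarith

/-- For integers m ≥ 2, n ≥ m, with v = max_{0≤x≤1} x^m((1-x)/(1+x))^n and
g(r) = r^(m-1)((1+r)/(1-r))^n, one has g(v) < 1. -/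
theorem g_of_v_lt_one (m n : ℕ) (hm : 2 ≤ m) (hmn : m ≤ n)
    (v : ℝ)
    (hv : v = sSup ((fun x : ℝ => x ^ m * ((1 - x) / (1 + x)) ^ n) '' Set.Icc 0 1)) :
    v ^ (m - 1) * ((1 + v) / (1 - v)) ^ n < 1 := by
  have hn2 : 2 ≤ n := hm.trans hmn
  have hnR : (2:ℝ) ≤ (n:ℝ) := by exact_mod_cast hn2
  set S := ((fun x : ℝ => x ^ m * ((1 - x) / (1 + x)) ^ n) '' Set.Icc 0 1) with hS
  have hmem0 : (0:ℝ) ∈ S := by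
    refine ⟨0, by simp, ?_⟩
    simp [zero_pow (by omega : m ≠ 0)]
  have hub : ∀ y ∈ S, y ≤ 1 / (2 * n) := by
    rintro y ⟨x, hx, rfl⟩
    exact pointwise_bound m n (by omega) (by omega) x hx.1 hx.2
  have hbdd : BddAbove S := ⟨1 / (2 * n), fun y hy => hub y hy⟩
  have hvle : v ≤ 1 / (2 * n) := hv ▸ csSup_le ⟨0, hmem0⟩ hub
  have hv0 : 0 ≤ v := hv ▸ le_csSup hbdd hmem0
  have hv4 : v ≤ 1 / 4 := by
    calc v ≤ 1 / (2 * n) := hvle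
      _ ≤ 1 / 4 := by
        apply one_div_le_one_div_of_le (by norm_num) (by linarith)
  have h1v : (0:ℝ) < 1 - v := by linarith
  -- bound the first factor
  have hpow1 : v ^ (m - 1) ≤ 1 / 4 := by
    calc v ^ (m - 1) ≤ v ^ 1 := pow_le_pow_of_le_one hv0 (by linarith) (by omega)
      _ = v := pow_one v
      _ ≤ 1 / 4 := hv4
  -- bound the second factor
  have hratio : (1 + v) / (1 - v) ≤ Real.exp (2 * v / (1 - v)) := by
    have : (1 + v) / (1 - v) = 2 * v / (1 - v) + 1 := by field_simp; ring
    rw [this]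
    exact Real.add_one_le_exp _
  have hratio0 : 0 ≤ (1 + v) / (1 - v) := by positivity
  have hexp : ((1 + v) / (1 - v)) ^ n ≤ Real.exp (n * (2 * v / (1 - v))) := by
    calc ((1 + v) / (1 - v)) ^ n ≤ Real.exp (2 * v / (1 - v)) ^ n :=
          pow_le_pow_left₀ hratio0 hratio n
      _ = Real.exp (n * (2 * v / (1 - v))) := by
          rw [← Real.exp_nat_mul]
  have harg : (n:ℝ) * (2 * v / (1 - v)) ≤ 4 / 3 := by
    have h2nv : 2 * (n:ℝ) * v ≤ 1 := by
      have := (le_div_iff₀ (by positivity : (0:ℝ) < 2 * n)).mp hvle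
      linarith
    have h34 : (3:ℝ)/4 ≤ 1 - v := by linarith
    rw [mul_div_assoc', div_le_iff₀ h1v]
    nlinarith
  have hexp43 : Real.exp (4 / 3) < 4 := by
    have h3 : Real.exp (4 / 3) ^ 3 = Real.exp 4 := by
      rw [← Real.exp_nat_mul]; norm_num
    have he4 : Real.exp 4 < 64 := by
      have : Real.exp 4 = Real.exp 1 ^ 4 := by
        rw [← Real.exp_nat_mul]; norm_num
      rw [this]
      have h := pow_lt_pow_left₀ Real.exp_one_lt_d9 (Real.exp_pos 1).le (n := 4) (by norm_num)
      calc Real.exp 1 ^ 4 < 2.7182818286 ^ 4 := h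
        _ < 64 := by norm_num
    have : Real.exp (4/3) ^ 3 < 4 ^ 3 := by rw [h3]; norm_num; linarith
    exact lt_of_pow_lt_pow_left₀ 3 (by norm_num) this
  have hfinal : ((1 + v) / (1 - v)) ^ n < 4 := by
    calc ((1 + v) / (1 - v)) ^ n ≤ Real.exp (n * (2 * v / (1 - v))) := hexp
      _ ≤ Real.exp (4 / 3) := Real.exp_le_exp.mpr harg
      _ < 4 := hexp43
  have hp0 : 0 ≤ v ^ (m - 1) := by positivity
  calc v ^ (m - 1) * ((1 + v) / (1 - v)) ^ n
      ≤ 1 / 4 * ((1 + v) / (1 - v)) ^ n := by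
        apply mul_le_mul_of_nonneg_right hpow1 (by positivity)
    _ < 1 / 4 * 4 := by
        apply mul_lt_mul_of_pos_left hfinal (by norm_num)
    _ = 1 := by norm_num
end

section
/- For every m ≥ 2 and n ≥ 1 there exists r ∈ (0,1) such that for all t with 0 < |t| ≤ 1, the image under f_t(z) = t z^m((1-z)/(1+z))^n of the closed disc {|z| ≤ r|t|} together with the segment [0,1] is contained in the open disc {|z| < r|t|}, and |f_t(β)| > r|t| where β = -n/m - sqrt(1+(n/m)^2). -/
set_option maxHeartbeats 1000000

lemma pow_mul_one_sub_le (u : ℝ) (h0 : 0 ≤ u) (h1 : u ≤ 1) (j : ℕ) :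
    u ^ j * (1 - u) ≤ 1 / (j + 1) := by
  rw [le_div_iff₀ (by positivity)]
  have h2 : ((j : ℝ) + 1) * u ^ j ≤ ∑ i ∈ Finset.range (j + 1), u ^ i := by
    have hterm : ∀ i ∈ Finset.range (j + 1), u ^ j ≤ u ^ i := fun i hi =>
      pow_le_pow_of_le_one h0 h1 (Nat.le_of_lt_succ (Finset.mem_range.mp hi))
    calc ((j : ℝ) + 1) * u ^ j = ∑ _i ∈ Finset.range (j + 1), u ^ j := by
          rw [Finset.sum_const, Finset.card_range, nsmul_eq_mul]; push_cast; ring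
      _ ≤ _ := Finset.sum_le_sum hterm
  have h3 : (∑ i ∈ Finset.range (j + 1), u ^ i) * (u - 1) = u ^ (j + 1) - 1 :=
    geom_sum_mul u (j + 1)
  have h4 : 0 ≤ u ^ (j + 1) := pow_nonneg h0 _
  nlinarith [mul_le_mul_of_nonneg_right h2 (sub_nonneg.mpr h1)]

/-- Lemma 1 (Trennung): for every m ≥ 2, n ≥ 1 there is r ∈ (0,1) such that
for 0 < |t| ≤ 1 the map f_t(z) = t·z^m((1-z)/(1+z))^n maps the closed disc
{|z| ≤ r|t|} and the segment [0,1] into the open disc {|z| < r|t|},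
while |f_t(β)| > r|t| for the free critical point β. -/
theorem trennung (m n : ℕ) (hm : 2 ≤ m) (hn : 1 ≤ n) :
    ∃ r : ℝ, 0 < r ∧ r < 1 ∧
      ∀ t : ℂ, 0 < ‖t‖ → ‖t‖ ≤ 1 →
        (∀ z : ℂ,
          (‖z‖ ≤ r * ‖t‖ ∨
            ∃ x : ℝ, x ∈ Set.Icc (0 : ℝ) 1 ∧ z = (x : ℂ)) →
          ‖t * z ^ m * ((1 - z) / (1 + z)) ^ n‖ < r * ‖t‖) ∧
        (let β : ℂ := ((-(n / m : ℝ) - Real.sqrt (1 + ((n : ℝ) / m) ^ 2) : ℝ) : ℂ)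
         ‖t * β ^ m * ((1 - β) / (1 + β)) ^ n‖ > r * ‖t‖) := by
  have hn1 : (1 : ℝ) ≤ (n : ℝ) := by exact_mod_cast hn
  have hnpos : (0 : ℝ) < (n : ℝ) := by linarith
  refine ⟨2 / (7 * n), by positivity, ?_, ?_⟩
  · rw [div_lt_one (by positivity)]; linarith
  intro t ht0 ht1
  set r : ℝ := 2 / (7 * (n : ℝ)) with hrdef
  have hr0 : 0 < r := by positivity
  have hrle : r ≤ 2 / 7 := by
    rw [hrdef, div_le_div_iff₀ (by positivity) (by norm_num)]; linarith
  have hr1 : r < 1 := by linarith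
  have h1r : 0 < 1 - r := by linarith
  -- key inequality : r * (1+r)^n < (1-r)^n
  have hnr : (n : ℝ) * r = 2 / 7 := by rw [hrdef]; field_simp
  have hbern : (1 : ℝ) - 2 * ((n : ℝ) * r) ≤ (1 - r) ^ (2 * n) := by
    have h := one_add_mul_le_pow (a := -r) (by linarith) (2 * n)
    have h2n : ((2 * n : ℕ) : ℝ) = 2 * (n : ℝ) := by push_cast; ring
    rw [h2n] at h
    calc (1 : ℝ) - 2 * ((n : ℝ) * r) = 1 + 2 * (n : ℝ) * (-r) := by ring
      _ ≤ (1 + -r) ^ (2 * n) := h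
      _ = (1 - r) ^ (2 * n) := by ring_nf
  have hrlt : r < (1 - r) ^ (2 * n) := by
    rw [hnr] at hbern; norm_num at hbern; linarith
  have key : r * (1 + r) ^ n < (1 - r) ^ n := by
    have e1 : r * (1 + r) ^ n * (1 - r) ^ n ≤ r := by
      have hmp : (1 + r) ^ n * (1 - r) ^ n = (1 - r ^ 2) ^ n := by
        rw [← mul_pow]; ring_nf
      rw [mul_assoc, hmp]
      have h01 : (1 - r ^ 2) ^ n ≤ 1 :=
        pow_le_one₀ (by nlinarith) (by nlinarith)
      nlinarith [pow_nonneg (by nlinarith : (0:ℝ) ≤ 1 - r ^ 2) n]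
    have e2 : r < (1 - r) ^ n * (1 - r) ^ n := by
      rw [← pow_add]
      have h2 : n + n = 2 * n := by ring
      rw [h2]; exact hrlt
    exact lt_of_mul_lt_mul_right (lt_of_le_of_lt e1 e2) (le_of_lt (pow_pos h1r n))
  have hK : r * ((1 + r) / (1 - r)) ^ n < 1 := by
    rw [div_pow, ← mul_div_assoc, div_lt_one (pow_pos h1r n)]
    exact key
  set T := ‖t‖ with hT
  have hTr : 0 < r * T := by positivity
  constructor
  · intro z hz
    rcases hz with hz | ⟨x, hx, rfl⟩
    · -- disc case
      rw [norm_mul, norm_mul, norm_pow, norm_pow, norm_div]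
      set Z := ‖z‖ with hZdef
      set A1 := ‖1 - z‖ with hA1def
      set A2 := ‖1 + z‖ with hA2def
      have hZ0 : 0 ≤ Z := norm_nonneg z
      have hZr : Z ≤ r := le_trans hz (by nlinarith)
      have hA1b : A1 ≤ 1 + r := by
        have h : A1 ≤ ‖(1:ℂ)‖ + Z := norm_sub_le 1 z
        rw [norm_one] at h
        linarith
      have hA2b : 1 - r ≤ A2 := by
        have h : ‖(1:ℂ)‖ - Z ≤ A2 := norm_sub_le_norm_add 1 z
        rw [norm_one] at h
        linarith
      have hA20 : 0 < A2 := lt_of_lt_of_le h1r hA2b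
      have hA10 : 0 ≤ A1 := norm_nonneg _
      have hratio : A1 / A2 ≤ (1 + r) / (1 - r) :=
        div_le_div₀ (by linarith) hA1b h1r hA2b
      have hratio0 : 0 ≤ A1 / A2 := div_nonneg hA10 hA20.le
      have hZm : Z ^ m ≤ r ^ 2 * T := by
        have h1 : Z ^ m ≤ Z ^ 2 := pow_le_pow_of_le_one hZ0 (by linarith) hm
        have h2 : Z ^ 2 ≤ r * (r * T) := by
          have := mul_le_mul hZr hz hZ0 hr0.le
          nlinarith
        nlinarith
      have hTT : T * T ≤ T := by nlinarith
      calc T * Z ^ m * (A1 / A2) ^ n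
          ≤ T * (r ^ 2 * T) * ((1 + r) / (1 - r)) ^ n := by
            gcongr
        _ = (r * ((1 + r) / (1 - r)) ^ n) * (r * (T * T)) := by ring
        _ ≤ (r * ((1 + r) / (1 - r)) ^ n) * (r * T) := by
            have hKK : 0 ≤ r * ((1 + r) / (1 - r)) ^ n := by positivity
            have : r * (T * T) ≤ r * T := by nlinarith
            exact mul_le_mul_of_nonneg_left this hKK
        _ < 1 * (r * T) := mul_lt_mul_of_pos_right hK hTr
        _ = r * T := one_mul _
    · -- segment case
      obtain ⟨hx0, hx1⟩ := hx
      obtain ⟨k, hk⟩ := Nat.exists_eq_add_of_le hn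
      have habs : ‖t * (x : ℂ) ^ m * ((1 - (x : ℂ)) / (1 + (x : ℂ))) ^ n‖
          = T * |x ^ m * ((1 - x) / (1 + x)) ^ n| := by
        rw [show (t * (x : ℂ) ^ m * ((1 - (x : ℂ)) / (1 + (x : ℂ))) ^ n)
              = t * (((x ^ m * ((1 - x) / (1 + x)) ^ n : ℝ)) : ℂ) by push_cast; ring]
        rw [norm_mul, Complex.norm_real, Real.norm_eq_abs]
      rw [habs]
      have hq0 : (0 : ℝ) ≤ (1 - x) / (1 + x) := div_nonneg (by linarith) (by linarith)
      have hqle : (1 - x) / (1 + x) ≤ 1 - x := div_le_self (by linarith) (by linarith)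
      have hbound : x ^ m * ((1 - x) / (1 + x)) ^ n < r := by
        have s1 : x ^ m ≤ x ^ 2 := pow_le_pow_of_le_one hx0 hx1 hm
        have s2 : ((1 - x) / (1 + x)) ^ n ≤ (1 - x) ^ n := pow_le_pow_left₀ hq0 hqle n
        have s3 : x ^ m * ((1 - x) / (1 + x)) ^ n ≤ x ^ 2 * (1 - x) ^ n :=
          mul_le_mul s1 s2 (pow_nonneg hq0 n) (by positivity)
        have hxx : x * (1 - x) ≤ 1 / 4 := by nlinarith [sq_nonneg (x - 1/2)]
        have hk2 : (1 - x) ^ k * x ≤ 1 / (k + 1) := by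
          have h := pow_mul_one_sub_le (1 - x) (by linarith) (by linarith) k
          rw [show (1 : ℝ) - (1 - x) = x by ring] at h
          exact h
        have s4 : x ^ 2 * (1 - x) ^ n = (x * (1 - x)) * ((1 - x) ^ k * x) := by
          rw [hk]; ring
        have s5 : x ^ 2 * (1 - x) ^ n ≤ (1 / 4) * (1 / ((k : ℝ) + 1)) := by
          rw [s4]
          exact mul_le_mul hxx hk2 (mul_nonneg (pow_nonneg (by linarith) k) hx0)
            (by norm_num)
        have hkn : ((k : ℝ) + 1) = (n : ℝ) := by
          have hnk : (n : ℝ) = 1 + (k : ℝ) := by exact_mod_cast hk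
          linarith
        have s6 : (1 / 4 : ℝ) * (1 / ((k : ℝ) + 1)) < r := by
          rw [hkn, hrdef, show (1/4 : ℝ) * (1 / (n : ℝ)) = 1 / (4 * n) by
            rw [div_mul_div_comm]; norm_num]
          rw [div_lt_div_iff₀ (by positivity) (by positivity)]
          nlinarith
        calc x ^ m * ((1 - x) / (1 + x)) ^ n ≤ x ^ 2 * (1 - x) ^ n := s3
          _ ≤ (1 / 4) * (1 / ((k : ℝ) + 1)) := s5
          _ < r := s6
      calc T * |x ^ m * ((1 - x) / (1 + x)) ^ n|
          = |x ^ m * ((1 - x) / (1 + x)) ^ n| * T := by ring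
        _ < r * T := by
            refine mul_lt_mul_of_pos_right ?_ ht0
            rw [abs_of_nonneg (by positivity)]
            exact hbound
  · -- beta part
    show ‖t * ((((-(n / m : ℝ) - Real.sqrt (1 + ((n : ℝ) / m) ^ 2) : ℝ)) : ℂ)) ^ m
        * ((1 - ((((-(n / m : ℝ) - Real.sqrt (1 + ((n : ℝ) / m) ^ 2) : ℝ)) : ℂ)))
          / (1 + ((((-(n / m : ℝ) - Real.sqrt (1 + ((n : ℝ) / m) ^ 2) : ℝ)) : ℂ)))) ^ n‖
        > r * T
    set a : ℝ := (n : ℝ) / (m : ℝ) with hadef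
    set s : ℝ := Real.sqrt (1 + a ^ 2) with hsdef
    set b : ℝ := -a - s with hbdef
    have hm1 : (1 : ℝ) ≤ (m : ℝ) := by
      have : (2 : ℝ) ≤ (m : ℝ) := by exact_mod_cast hm
      linarith
    have ha0 : 0 < a := div_pos hnpos (by linarith)
    have hs1 : 1 ≤ s := by
      rw [hsdef]
      have h := Real.sqrt_le_sqrt (show (1 : ℝ) ≤ 1 + a ^ 2 by nlinarith)
      rwa [Real.sqrt_one] at h
    have hb_neg : b < 0 := by rw [hbdef]; linarith
    have hab1 : 1 < a + s := by linarith
    have habs : ‖t * ((b : ℝ) : ℂ) ^ m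
        * ((1 - ((b : ℝ) : ℂ)) / (1 + ((b : ℝ) : ℂ))) ^ n‖
        = T * |b ^ m * ((1 - b) / (1 + b)) ^ n| := by
      rw [show (t * ((b : ℝ) : ℂ) ^ m * ((1 - ((b : ℝ) : ℂ)) / (1 + ((b : ℝ) : ℂ))) ^ n)
            = t * (((b ^ m * ((1 - b) / (1 + b)) ^ n : ℝ)) : ℂ) by push_cast; ring]
      rw [norm_mul, Complex.norm_real, Real.norm_eq_abs]
    rw [gt_iff_lt, habs]
    have hP : 1 ≤ |b ^ m * ((1 - b) / (1 + b)) ^ n| := by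
      rw [abs_mul, abs_pow, abs_pow, abs_div]
      have h1 : |b| = a + s := by rw [abs_of_neg hb_neg, hbdef]; ring
      have h2 : |1 - b| = 1 + a + s := by
        rw [abs_of_pos (by rw [hbdef]; linarith : (0:ℝ) < 1 - b), hbdef]; ring
      have h3 : |1 + b| = a + s - 1 := by
        rw [abs_of_neg (by rw [hbdef]; linarith : 1 + b < 0), hbdef]; ring
      rw [h1, h2, h3]
      have hd : 0 < a + s - 1 := by linarith
      have hr1' : (1 : ℝ) ≤ (1 + a + s) / (a + s - 1) := by
        rw [le_div_iff₀ hd]; linarith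
      have p1 : (1 : ℝ) ≤ (a + s) ^ m := one_le_pow₀ hab1.le
      have p2 : (1 : ℝ) ≤ ((1 + a + s) / (a + s - 1)) ^ n := one_le_pow₀ hr1'
      nlinarith
    calc r * T < 1 * T := mul_lt_mul_of_pos_right hr1 ht0
      _ = T := one_mul T
      _ ≤ T * |b ^ m * ((1 - b) / (1 + b)) ^ n| := le_mul_of_one_le_right ht0.le hP
end

section
/- The roots λ of 2tλ^2 + (1 - 10t + t^2)λ + (-2 + 14t - 2t^2) = 0 are exactly the multipliers of the finite fixed points z ≠ 0 of f_t(z) = t z^2 (1-z)/(1+z); i.e., this quadratic in λ is (up to a nonzero factor) the resultant with respect to z of f_t(z) - z = 0 (excluding z = 0) and f_t'(z) - λ = 0. -/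
/-- Derivative of f_t at a point z ≠ -1. -/
lemma deriv_f_aux (t z : ℂ) (hz : (1:ℂ) + z ≠ 0) :
    deriv (fun w : ℂ => t * w ^ 2 * (1 - w) / (1 + w)) z
      = 2 * t * z * (1 - z - z ^ 2) / (1 + z) ^ 2 := by
  have hp : HasDerivAt (fun w : ℂ => t * w ^ 2) (t * (2 * z)) z := by
    simpa using (hasDerivAt_pow 2 z).const_mul t
  have hq : HasDerivAt (fun w : ℂ => 1 - w) (-1 : ℂ) z := by
    simpa using (hasDerivAt_id z).const_sub 1
  have h1 : HasDerivAt (fun w : ℂ => t * w ^ 2 * (1 - w))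
      (t * (2 * z) * (1 - z) + t * z ^ 2 * (-1)) z := hp.mul hq
  have h2 : HasDerivAt (fun w : ℂ => 1 + w) (1 : ℂ) z := by
    simpa using (hasDerivAt_id z).const_add 1
  have h3 := h1.div h2 hz
  rw [HasDerivAt.deriv (f := fun w : ℂ => t * w ^ 2 * (1 - w) / (1 + w)) h3]
  field_simp
  ring

/-- For t ≠ 0, the roots λ of 2tλ² + (1-10t+t²)λ + (-2+14t-2t²) = 0 are
exactly the multipliers λ = f_t'(z) at the finite fixed points z ≠ 0 of
f_t(z) = t z²(1-z)/(1+z). -/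
theorem multiplier_resultant_f (t lam : ℂ) (ht : t ≠ 0) :
    (2 * t * lam ^ 2 + (1 - 10 * t + t ^ 2) * lam + (-2 + 14 * t - 2 * t ^ 2) = 0)
    ↔ ∃ z : ℂ, z ≠ 0 ∧ z ≠ -1 ∧
        t * z ^ 2 * (1 - z) / (1 + z) = z ∧
        deriv (fun w : ℂ => t * w ^ 2 * (1 - w) / (1 + w)) z = lam := by
  constructor
  · -- root of quadratic → fixed point with that multiplier
    intro hQ
    by_cases hA : (3 * t - 1) * lam + 2 * t ^ 2 - 8 * t + 2 = 0
    · -- degenerate case: forces t = -1, lam = 3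
      have hB : (t - 1) * lam - 4 * t + 2 = 0 := by
        have h2 : t * ((t - 1) * lam - 4 * t + 2) ^ 2 = 0 := by
          linear_combination 2 * t ^ 2 * hQ +
            ((1 - t) * ((t - 1) * lam - 4 * t + 2)
              - ((3 * t - 1) * lam + 2 * t ^ 2 - 8 * t + 2)) * hA
        rcases mul_eq_zero.mp h2 with h | h
        · exact absurd h ht
        · exact pow_eq_zero_iff (two_ne_zero) |>.mp h
      have ht1 : t = -1 := by
        have h3 : 2 * t ^ 2 * (t + 1) = 0 := by
          linear_combination (t - 1) * hA - (3 * t - 1) * hB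
        rcases mul_eq_zero.mp h3 with h | h
        · exfalso
          rcases mul_eq_zero.mp h with h' | h'
          · norm_num at h'
          · exact ht (pow_eq_zero_iff two_ne_zero |>.mp h')
        · linear_combination h
      have hlam : lam = 3 := by
        rw [ht1] at hB
        linear_combination (-1/2 : ℂ) * hB
      -- witness z = 1 + sqrt 2 (as a complex number), satisfying z^2 = 2z + 1
      have hr : (1 + Real.sqrt 2 : ℝ) ^ 2 = 2 * (1 + Real.sqrt 2) + 1 := by
        nlinarith [Real.sq_sqrt (show (0:ℝ) ≤ 2 by norm_num)]
      have hz2 : ((1 + Real.sqrt 2 : ℝ) : ℂ) ^ 2 = 2 * ((1 + Real.sqrt 2 : ℝ) : ℂ) + 1 := by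
        exact_mod_cast hr
      have hzpos : (0:ℝ) < 1 + Real.sqrt 2 := by positivity
      have hz0 : ((1 + Real.sqrt 2 : ℝ) : ℂ) ≠ 0 := by
        exact_mod_cast hzpos.ne'
      have hzne : ((1 + Real.sqrt 2 : ℝ) : ℂ) ≠ -1 := by
        intro h
        have h' : (1 + Real.sqrt 2 : ℝ) = -1 := by exact_mod_cast h
        nlinarith [Real.sqrt_nonneg 2]
      have hz1 : (1:ℂ) + ((1 + Real.sqrt 2 : ℝ) : ℂ) ≠ 0 := by
        intro h
        exact hzne (by linear_combination h)
      refine ⟨((1 + Real.sqrt 2 : ℝ) : ℂ), hz0, hzne, ?_, ?_⟩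
      · rw [ht1, div_eq_iff hz1]
        linear_combination ((1 + Real.sqrt 2 : ℝ) : ℂ) * hz2
      · rw [deriv_f_aux t _ hz1, ht1, hlam, div_eq_iff (pow_ne_zero 2 hz1)]
        linear_combination (2 * ((1 + Real.sqrt 2 : ℝ) : ℂ) + 3) * hz2
    · -- generic case: z = -B/A
      set A : ℂ := (3 * t - 1) * lam + 2 * t ^ 2 - 8 * t + 2 with hAdef
      set B : ℂ := (t - 1) * lam - 4 * t + 2 with hBdef
      set z : ℂ := -B / A with hzdef
      -- P(z) = 0
      have hP : t * z ^ 2 + (1 - t) * z + 1 = 0 := by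
        rw [hzdef]
        field_simp
        linear_combination (2 * t ^ 2) * hQ
      have hz0 : z ≠ 0 := by
        intro h
        rw [h] at hP
        simp at hP
      have hz1 : (1:ℂ) + z ≠ 0 := by
        intro h
        have hzm : z = -1 := by linear_combination h
        rw [hzm] at hP
        have : (2:ℂ) * t = 0 := by linear_combination hP
        rcases mul_eq_zero.mp this with h' | h'
        · norm_num at h'
        · exact ht h'
      have hzne : z ≠ -1 := by
        intro h
        exact hz1 (by rw [h]; ring)
      -- E = 0 : lam * (1+z)^2 = 2tz(1-z-z²)
      have hAB : A * z + B = 0 := by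
        rw [hzdef]
        field_simp
        ring
      have hE : lam * (1 + z) ^ 2 = 2 * t * z * (1 - z - z ^ 2) := by
        have h4 : t * (lam * (1 + z) ^ 2 - 2 * t * z * (1 - z - z ^ 2)) = 0 := by
          linear_combination (2 * t * z + lam + 4 * t - 2) * hP + hAB
        rcases mul_eq_zero.mp h4 with h | h
        · exact absurd h ht
        · linear_combination h
      refine ⟨z, hz0, hzne, ?_, ?_⟩
      · rw [div_eq_iff hz1]
        linear_combination (-z) * hP
      · rw [deriv_f_aux t z hz1, div_eq_iff (pow_ne_zero 2 hz1)]
        linear_combination -hE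
  · -- fixed point with multiplier lam → root of quadratic
    rintro ⟨z, hz0, hzne, hfix, hder⟩
    have hz1 : (1:ℂ) + z ≠ 0 := by
      intro h
      exact hzne (by linear_combination h)
    rw [div_eq_iff hz1] at hfix
    have hP : t * z ^ 2 + (1 - t) * z + 1 = 0 := by
      have h5 : z * (t * z ^ 2 + (1 - t) * z + 1) = 0 := by
        linear_combination -hfix
      rcases mul_eq_zero.mp h5 with h | h
      · exact absurd h hz0
      · exact h
    rw [deriv_f_aux t z hz1] at hder
    have hE : lam * (1 + z) ^ 2 = 2 * t * z * (1 - z - z ^ 2) := by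
      rw [← hder]
      field_simp
    -- from tE = (2tz + lam + 4t - 2) P + (Az + B), get Az + B = 0
    have hAB : ((3 * t - 1) * lam + 2 * t ^ 2 - 8 * t + 2) * z
        + ((t - 1) * lam - 4 * t + 2) = 0 := by
      linear_combination t * hE - (2 * t * z + lam + 4 * t - 2) * hP
    -- 2t²Q = A²P - (Az+B)(tAz - tB + (1-t)A)
    have h2Q : 2 * t ^ 2 * (2 * t * lam ^ 2 + (1 - 10 * t + t ^ 2) * lam
        + (-2 + 14 * t - 2 * t ^ 2)) = 0 := by
      linear_combination ((3 * t - 1) * lam + 2 * t ^ 2 - 8 * t + 2) ^ 2 * hP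
        - (t * ((3 * t - 1) * lam + 2 * t ^ 2 - 8 * t + 2) * z
            - t * ((t - 1) * lam - 4 * t + 2)
            + (1 - t) * ((3 * t - 1) * lam + 2 * t ^ 2 - 8 * t + 2)) * hAB
    have h6 := mul_eq_zero.mp h2Q
    rcases h6 with h | h
    · rcases mul_eq_zero.mp h with h' | h'
      · norm_num at h'
      · exact absurd (pow_eq_zero_iff two_ne_zero |>.mp h') ht
    · exact h
end

section
/- The resultant with respect to λ of R_f(t,λ) = -2+14t-2t^2 + (1-10t+t^2)λ + 2tλ^2 and R_P(c,λ) = 9+2c - (c+6)λ + λ^2 equals (up to a nonzero constant factor) (1 + 2t + t^2 + 2tc)^2; consequently the multipliers agree for all fixed points iff c = -(t + 2 + 1/t)/2. -/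
/-- The resultant of two quadratics a₂λ² + a₁λ + a₀ and b₂λ² + b₁λ + b₀
with respect to λ (Sylvester formula). -/
def res2 (a₂ a₁ a₀ b₂ b₁ b₀ : ℂ) : ℂ :=
  (a₂ * b₀ - a₀ * b₂) ^ 2 - (a₂ * b₁ - a₁ * b₂) * (a₁ * b₀ - a₀ * b₁)

lemma res2_eq (t c : ℂ) :
    res2 (2 * t) (1 - 10 * t + t ^ 2) (-2 + 14 * t - 2 * t ^ 2)
        1 (-(c + 6)) (9 + 2 * c)
      = (1 + 2 * t + t ^ 2 + 2 * t * c) ^ 2 := by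
  unfold res2; ring

/-- The resultant (w.r.t. λ) of R_f(t,λ) = -2+14t-2t² + (1-10t+t²)λ + 2tλ²
and R_P(c,λ) = 9+2c - (c+6)λ + λ² equals, up to a nonzero constant factor,
(1 + 2t + t² + 2tc)²; consequently, for t ≠ 0 it vanishes iff
c = -(t + 2 + 1/t)/2. -/
theorem resultant_identity :
    (∃ k : ℂ, k ≠ 0 ∧ ∀ t c : ℂ,
      res2 (2 * t) (1 - 10 * t + t ^ 2) (-2 + 14 * t - 2 * t ^ 2)
        1 (-(c + 6)) (9 + 2 * c)
      = k * (1 + 2 * t + t ^ 2 + 2 * t * c) ^ 2) ∧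
    ∀ t c : ℂ, t ≠ 0 →
      (res2 (2 * t) (1 - 10 * t + t ^ 2) (-2 + 14 * t - 2 * t ^ 2)
        1 (-(c + 6)) (9 + 2 * c) = 0 ↔ c = -(t + 2 + 1 / t) / 2) := by
  constructor
  · exact ⟨1, one_ne_zero, fun t c => by rw [res2_eq, one_mul]⟩
  · intro t c ht
    rw [res2_eq, pow_eq_zero_iff (two_ne_zero)]
    constructor
    · intro h
      field_simp
      linear_combination (1 + 2 * t - 2 * t) * h
    · intro h
      subst h
      field_simp
      ring
end
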